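/- In the field ℚ(q) of rational functions in an indeterminate q, for ε ∈ {+1, −1} and integers b ≥ 0 and k ≥ 1: T_k(ε·q^b, q) = Σ_{i=0}^{k−1} (q^{i(2k+1)} / (ε·q; q)_b) · [b choose i]_{q^2} · T_{k−i}(ε, q) + Σ_{i=0}^{b−1} ((ε·q; q)_i / (ε·q; q)_b) · q^{k(2k+2i+1)} · [b−i−1 choose k−1]_{q^2}. -/
import Mathlib


/-- The polynomials `T_k(t,q)` defined by `T_0 = 1` and, for `k ≥ 1`,
`T_k = T_{k-1} + (1+t)(-q)^{k²} + (1-t²) ∑_{i=1}^{k-1} (-q)^{k²-i²} T_{i-1}`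
(below the sum is reindexed by `i ↦ i+1`). -/
def T {R : Type*} [CommRing R] (t q : R) : ℕ → R
  | 0 => 1
  | (k+1) => T t q k + (1 + t) * (-q) ^ ((k+1)^2) +
      (1 - t^2) * ∑ i ∈ (Finset.range k).attach,
        (-q) ^ ((k+1)^2 - (i.1+1)^2) * T t q i.1
decreasing_by
  · exact Nat.lt_succ_self k
  · exact Nat.lt_succ_of_lt (Finset.mem_range.mp i.2)

/-- `f n h` with `f 0 0 = 1`, `f 0 h = 0` for `h ≥ 1`, `f n h = 0` for `h < 0`, and
`f n h = (1-q^h) f (n-1) (h-1) + (1-t q^{h+1}) f (n-1) (h+1)`; at `h = 0` the first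
term vanishes since `1 - q^0 = 0`. -/
def f {R : Type*} [CommRing R] (t q : R) : ℕ → ℕ → R
  | 0, h => if h = 0 then 1 else 0
  | (n+1), 0 => (1 - t * q) * f t q n 1
  | (n+1), (h+1) => (1 - q^(h+1)) * f t q n h + (1 - t * q^(h+2)) * f t q n (h+2)

/-- `Ẽ_n(t,q) = f(2n,0)`, which is `(1-q)^{2n}` times the `(t,q)`-Euler number. -/
def Etilde {R : Type*} [CommRing R] (t q : R) (n : ℕ) : R := f t q (2*n) 0

/-- Binomial coefficient with integer lower index, `0` when the lower index is negative. -/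
def binom (n : ℕ) (m : ℤ) : ℤ := if 0 ≤ m then (n.choose m.toNat : ℤ) else 0

/-- q-Pochhammer symbol `(a;q)_n = ∏_{j=0}^{n-1} (1 - a q^j)`. -/
def qPoch {K : Type*} [CommRing K] (a q : K) (n : ℕ) : K :=
  ∏ j ∈ Finset.range n, (1 - a * q ^ j)

/-- Gaussian binomial coefficient `[n choose k]_q = (q;q)_n / ((q;q)_k (q;q)_{n-k})`,
equal to `0` whenever `k < 0` or `k > n`. -/
def gauss {K : Type*} [Field K] (q : K) (n k : ℤ) : K :=
  if 0 ≤ k ∧ k ≤ n then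
    qPoch q q n.toNat / (qPoch q q k.toNat * qPoch q q (n - k).toNat)
  else 0

/-- Number of distinct (positive) part sizes of the partition encoded by an
antitone function `Fin m → Fin (n+1)`. -/
def distCard {m n : ℕ} (g : Fin m → Fin (n+1)) : ℕ :=
  ((Finset.univ.image fun i => ((g i : ℕ))).erase 0).card

/-- `∑_{λ ⊆ B(m,n)} x^{dist(λ)} q^{|λ|}`: partitions in the `m × n` box are encoded
as antitone functions `Fin m → Fin (n+1)`. -/
def boxSum {R : Type*} [CommRing R] (x q : R) (m n : ℕ) : R :=
  ∑ g ∈ Finset.univ.filter (fun g : Fin m → Fin (n+1) => ∀ i j : Fin m, i ≤ j → g j ≤ g i),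
    x ^ distCard g * q ^ (∑ i, (g i : ℕ))

/-- The indeterminate `q` in the field `ℚ(q)` of rational functions. -/
noncomputable def Xq : RatFunc ℚ := RatFunc.X
section TT
variable {R : Type*} [CommRing R] (t q : R)

lemma T_def_succ (k : ℕ) :
    T t q (k+1) = T t q k + (1+t)*(-q)^((k+1)^2) +
      (1-t^2) * ∑ i ∈ Finset.range k, (-q)^((k+1)^2-(i+1)^2) * T t q i := by
  rw [T]
  exact congrArg _ (congrArg _ (Finset.sum_attach (Finset.range k)
    (fun i => (-q)^((k+1)^2-(i+1)^2) * T t q i)))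

lemma T_rec (m : ℕ) :
    T t q (m+2) = (1 - q^(2*m+3)) * T t q (m+1) + q^(2*m+3) * t^2 * T t q m := by
  have h2 := T_def_succ t q (m+1)
  have h1 := T_def_succ t q m
  rw [Finset.sum_range_succ] at h2
  have hsum : ∑ i ∈ Finset.range m, (-q)^((m+1+1)^2-(i+1)^2) * T t q i
      = (-q)^(2*m+3) * ∑ i ∈ Finset.range m, (-q)^((m+1)^2-(i+1)^2) * T t q i := by
    rw [Finset.mul_sum]; apply Finset.sum_congr rfl; intro i hi
    have hi' : i < m := Finset.mem_range.mp hi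
    have hle : (i+1)^2 ≤ (m+1)^2 := Nat.pow_le_pow_left (by omega) 2
    have he : (m+1+1)^2 - (i+1)^2 = (2*m+3) + ((m+1)^2 - (i+1)^2) := by
      have h3 : (m+1+1)^2 = (m+1)^2 + (2*m+3) := by ring
      omega
    rw [he, pow_add]; ring
  have hexp : (m+1+1)^2 - (m+1)^2 = 2*m+3 := by
    have h3 : (m+1+1)^2 = (m+1)^2 + (2*m+3) := by ring
    omega
  rw [hexp, hsum] at h2
  have hT1 : (1 - t^2) * ∑ i ∈ Finset.range m, (-q)^((m+1)^2-(i+1)^2) * T t q i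
      = T t q (m+1) - T t q m - (1+t)*(-q)^((m+1)^2) := by rw [h1]; ring
  have hodd : (-q)^(2*m+3) = -(q^(2*m+3)) := Odd.neg_pow ⟨m+1, by ring⟩ q
  have hpow : (-q)^((m+1+1)^2) = (-q)^((m+1)^2) * (-q)^(2*m+3) := by
    rw [← pow_add]; congr 1; ring
  rw [h2, hpow, hodd]
  linear_combination (-(q^(2*m+3))) * hT1
end TT
section MM
variable {R : Type*} [CommRing R]

lemma T_zero (t q : R) : T t q 0 = 1 := by rw [T]

lemma T_one (t q : R) : T t q 1 = 1 - q - t*q := by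
  rw [T_def_succ]
  simp only [Finset.range_zero, Finset.sum_empty, T_zero]
  ring

lemma T_master (t q : R) : ∀ m : ℕ,
    (1 - t*q) * T (t*q) q (m+1) = T t q (m+1) + t^2 * q^(2*m+3) * T t q m := by
  intro m
  induction m using Nat.strong_induction_on with
  | _ m ih =>
    match m with
    | 0 => rw [T_one, T_one, T_zero]; ring
    | 1 =>
      have hA := T_rec (t*q) q 0
      have hB := T_rec t q 0
      rw [show (0:ℕ)+2 = 2 from rfl] at hA hB
      rw [hA, hB, T_one, T_one, T_zero, T_zero]
      ring
    | (n+2) =>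
      have hA := T_rec (t*q) q (n+1)
      have hB := T_rec t q (n+1)
      have hC := T_rec t q n
      have ih1 := ih (n+1) (by omega)
      have ih0 := ih n (by omega)
      rw [hA, hB]
      linear_combination (1 - q^(2*(n+1)+3)) * ih1 + (q^(2*(n+1)+3)*(t*q)^2) * ih0 +
        (-(t^2*q^(2*(n+2)+3))) * hC
end MM
section QP
variable {K : Type*} [Field K]

lemma qPoch_zero (a q : K) : qPoch a q 0 = 1 := Finset.prod_range_zero _

lemma qPoch_succ (a q : K) (n : ℕ) : qPoch a q (n+1) = qPoch a q n * (1 - a * q^n) :=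
  Finset.prod_range_succ _ _

lemma gauss_nat (q : K) (n k : ℕ) (h : k ≤ n) :
    gauss q (n : ℤ) (k : ℤ) = qPoch q q n / (qPoch q q k * qPoch q q (n-k)) := by
  rw [gauss, if_pos ⟨Int.ofNat_nonneg k, by exact_mod_cast h⟩]
  have h1 : ((n:ℤ)).toNat = n := Int.toNat_natCast n
  have h2 : ((k:ℤ)).toNat = k := Int.toNat_natCast k
  have h3 : ((n:ℤ) - (k:ℤ)).toNat = n - k := by omega
  rw [h1, h2, h3]

lemma gauss_of_gt (q : K) {n k : ℤ} (h : n < k) : gauss q n k = 0 := by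
  rw [gauss, if_neg]; rintro ⟨-, h2⟩; omega

lemma gauss_of_neg (q : K) {n k : ℤ} (h : k < 0) : gauss q n k = 0 := by
  rw [gauss, if_neg]; rintro ⟨h1, -⟩; omega

variable (q : K) (hnz : ∀ m : ℕ, qPoch q q m ≠ 0)
include hnz

lemma gauss_zero_right (n : ℕ) : gauss q (n:ℤ) 0 = 1 := by
  have := gauss_nat q n 0 (Nat.zero_le _)
  rw [show ((0:ℕ):ℤ) = 0 from rfl] at this
  rw [this, qPoch_zero, Nat.sub_zero, one_mul, div_self (hnz n)]

lemma gauss_diag (n : ℕ) : gauss q (n:ℤ) (n:ℤ) = 1 := by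
  rw [gauss_nat q n n le_rfl, Nat.sub_self, qPoch_zero, mul_one, div_self (hnz n)]

lemma gauss_pascal (n j : ℕ) (hj1 : 1 ≤ j) (hj : j ≤ n+1) :
    gauss q ((n:ℤ)+1) (j:ℤ) = gauss q (n:ℤ) (j:ℤ) + q^(n+1-j) * gauss q (n:ℤ) ((j:ℤ)-1) := by
  obtain ⟨j', rfl⟩ : ∃ j', j = j'+1 := ⟨j-1, by omega⟩
  have hcast1 : ((n:ℤ)+1) = ((n+1 : ℕ) : ℤ) := by push_cast; ring
  have hcast2 : ((j'+1:ℕ):ℤ) - 1 = ((j' : ℕ) : ℤ) := by push_cast; ring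
  rcases Nat.eq_or_lt_of_le (by omega : j' ≤ n) with hc | hc
  · subst hc
    rw [hcast1, hcast2, gauss_diag q hnz,
      gauss_of_gt q (by exact_mod_cast Nat.lt_succ_self j'), gauss_diag q hnz]
    simp
  · obtain ⟨u, rfl⟩ : ∃ u, n = u + j' + 1 := ⟨n - j' - 1, by omega⟩
    rw [hcast1, hcast2,
      show ((u+j'+1+1 : ℕ) : ℤ) = (((u+j'+2 : ℕ)) : ℤ) from by push_cast; ring,
      gauss_nat q (u+j'+2) (j'+1) (by omega),
      gauss_nat q (u+j'+1) (j'+1) (by omega),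
      gauss_nat q (u+j'+1) j' (by omega),
      show u+j'+2-(j'+1) = u+1 from by omega,
      show u+j'+1-(j'+1) = u from by omega,
      show u+j'+1-j' = u+1 from by omega]
    have e1 : qPoch q q (u+j'+2) = qPoch q q (u+j'+1) * (1 - q*q^(u+j'+1)) := by
      rw [show u+j'+2 = (u+j'+1)+1 from rfl, qPoch_succ]
    have e2 : qPoch q q (j'+1) = qPoch q q j' * (1 - q*q^(j')) := qPoch_succ _ _ _
    have e3 : qPoch q q (u+1) = qPoch q q u * (1 - q*q^(u)) := qPoch_succ _ _ _
    rw [e1, e2, e3]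
    have hα : (1 - q*q^(j')) ≠ 0 := by
      have := hnz (j'+1); rw [qPoch_succ] at this; exact right_ne_zero_of_mul this
    have hβ : (1 - q*q^(u)) ≠ 0 := by
      have := hnz (u+1); rw [qPoch_succ] at this; exact right_ne_zero_of_mul this
    have h1 := hnz j'
    have h2 := hnz u
    have h3 := hnz (u+j'+1)
    field_simp
    ring
end QP
section RF

lemma one_sub_X_pow_ne_zero (m : ℕ) (hm : 1 ≤ m) : (1 : RatFunc ℚ) - Xq^m ≠ 0 := by
  intro h
  have h2 : (algebraMap (Polynomial ℚ) (RatFunc ℚ)) (1 - Polynomial.X^m) = 0 := by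
    rw [map_sub, map_one, map_pow, RatFunc.algebraMap_X]
    exact h
  have h0 : (1 - Polynomial.X^m : Polynomial ℚ) = 0 := by
    exact (map_eq_zero_iff _ (RatFunc.algebraMap_injective ℚ)).mp h2
  have := congrArg (fun p => Polynomial.coeff p 0) h0
  simp only [Polynomial.coeff_sub, Polynomial.coeff_add, Polynomial.coeff_one,
    Polynomial.coeff_X_pow, Polynomial.coeff_zero] at this
  rw [if_neg (by omega : ¬ 0 = m)] at this
  norm_num at this

lemma one_add_X_pow_ne_zero (m : ℕ) (hm : 1 ≤ m) : (1 : RatFunc ℚ) + Xq^m ≠ 0 := by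
  intro h
  have h2 : (algebraMap (Polynomial ℚ) (RatFunc ℚ)) (1 + Polynomial.X^m) = 0 := by
    rw [map_add, map_one, map_pow, RatFunc.algebraMap_X]
    exact h
  have h0 : (1 + Polynomial.X^m : Polynomial ℚ) = 0 := by
    exact (map_eq_zero_iff _ (RatFunc.algebraMap_injective ℚ)).mp h2
  have := congrArg (fun p => Polynomial.coeff p 0) h0
  simp only [Polynomial.coeff_sub, Polynomial.coeff_add, Polynomial.coeff_one,
    Polynomial.coeff_X_pow, Polynomial.coeff_zero] at this
  rw [if_neg (by omega : ¬ 0 = m)] at this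
  norm_num at this

lemma qPoch_sq_ne_zero (m : ℕ) : qPoch (Xq^2) (Xq^2) m ≠ 0 := by
  rw [qPoch]
  apply Finset.prod_ne_zero_iff.mpr
  intro j _
  have : (Xq:RatFunc ℚ)^2 * (Xq^2)^j = Xq^(2*j+2) := by rw [← pow_mul, ← pow_add]; ring_nf
  rw [this]
  exact one_sub_X_pow_ne_zero (2*j+2) (by omega)

lemma qPoch_eps_ne_zero (ε : RatFunc ℚ) (hε : ε = 1 ∨ ε = -1) (b : ℕ) :
    qPoch (ε * Xq) Xq b ≠ 0 := by
  rw [qPoch]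
  apply Finset.prod_ne_zero_iff.mpr
  intro j _
  have he : ε * Xq * Xq ^ j = ε * Xq^(j+1) := by rw [pow_succ]; ring
  rw [he]
  rcases hε with h | h <;> rw [h]
  · simpa using one_sub_X_pow_ne_zero (j+1) (by omega)
  · have := one_add_X_pow_ne_zero (j+1) (by omega)
    simpa [sub_neg_eq_add] using this
end RF
section STEPS

-- termwise Pascal, version for stepA
lemma coefA (b m i : ℕ) :
    Xq^((i+1)*(2*(m+1)+1)) * gauss (Xq^2) ((b:ℤ)+1) ((i+1:ℕ):ℤ)
    = Xq^((i+1)*(2*(m+1)+1)) * gauss (Xq^2) (b:ℤ) ((i+1:ℕ):ℤ)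
      + Xq^(2*b+2*m+3) * Xq^(i*(2*m+1)) * gauss (Xq^2) (b:ℤ) (i:ℤ) := by
  rcases le_or_gt i b with hib | hib
  · have hp := gauss_pascal (Xq^2) qPoch_sq_ne_zero b (i+1) (by omega) (by omega)
    rw [show (((i+1:ℕ)):ℤ) - 1 = ((i:ℕ):ℤ) from by push_cast; ring] at hp
    rw [hp, show b+1-(i+1) = b-i from by omega, mul_add]
    congr 1
    rw [← pow_mul, ← mul_assoc, ← pow_add, ← pow_add]
    congr 2
    have h1 : (i+1)*(2*(m+1)+1) = 2*(m*i)+3*i+2*m+3 := by ring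
    have h2 : i*(2*m+1) = 2*(m*i)+i := by ring
    omega
  · rw [gauss_of_gt (Xq^2) (show (b:ℤ)+1 < ((i+1:ℕ):ℤ) from by push_cast; omega),
      gauss_of_gt (Xq^2) (show (b:ℤ) < ((i+1:ℕ):ℤ) from by push_cast; omega),
      gauss_of_gt (Xq^2) (show (b:ℤ) < ((i:ℕ):ℤ) from by push_cast; omega)]
    ring

-- Lemma A : step in b for the first sum
lemma stepA (ε : RatFunc ℚ) (b m : ℕ) :
    ∑ i ∈ Finset.range (m+1), Xq^(i*(2*(m+1)+1)) * gauss (Xq^2) ((b:ℤ)+1) (i:ℤ) * T ε Xq ((m+1)-i)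
    = (∑ i ∈ Finset.range (m+1), Xq^(i*(2*(m+1)+1)) * gauss (Xq^2) (b:ℤ) (i:ℤ) * T ε Xq ((m+1)-i))
      + Xq^(2*b+2*m+3) * ∑ i ∈ Finset.range m, Xq^(i*(2*m+1)) * gauss (Xq^2) (b:ℤ) (i:ℤ) * T ε Xq (m-i) := by
  rw [Finset.sum_range_succ', Finset.sum_range_succ' _ m, Finset.mul_sum]
  have hz1 : gauss (Xq^2) ((b:ℤ)+1) ((0:ℕ):ℤ) = 1 := by
    rw [show ((b:ℤ)+1) = ((b+1:ℕ):ℤ) from by push_cast; ring]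
    exact gauss_zero_right _ qPoch_sq_ne_zero _
  have hz2 : gauss (Xq^2) ((b:ℕ):ℤ) ((0:ℕ):ℤ) = 1 := gauss_zero_right _ qPoch_sq_ne_zero _
  rw [hz1, hz2]
  have hterm : ∀ i ∈ Finset.range m,
      Xq^((i+1)*(2*(m+1)+1)) * gauss (Xq^2) ((b:ℤ)+1) ((i+1:ℕ):ℤ) * T ε Xq ((m+1)-(i+1))
      = Xq^((i+1)*(2*(m+1)+1)) * gauss (Xq^2) (b:ℤ) ((i+1:ℕ):ℤ) * T ε Xq ((m+1)-(i+1))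
        + Xq^(2*b+2*m+3) * (Xq^(i*(2*m+1)) * gauss (Xq^2) (b:ℤ) (i:ℤ) * T ε Xq (m-i)) := by
    intro i _
    rw [show (m+1)-(i+1) = m-i from by omega]
    linear_combination (T ε Xq (m-i)) * coefA b m i
  rw [Finset.sum_congr rfl hterm, Finset.sum_add_distrib]
  ring

end STEPS
section STEPS2

-- k = 1 case of the C-step
lemma stepB1 (ε : RatFunc ℚ) (b : ℕ) :
    ∑ i ∈ Finset.range (b+1), qPoch (ε*Xq) Xq i * Xq^(1*(2*1+2*i+1)) * gauss (Xq^2) ((b:ℤ)+1-i-1) 0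
    = (∑ i ∈ Finset.range b, qPoch (ε*Xq) Xq i * Xq^(1*(2*1+2*i+1)) * gauss (Xq^2) ((b:ℤ)-i-1) 0)
      + Xq^(2*b+3) * qPoch (ε*Xq) Xq b := by
  rw [Finset.sum_range_succ]
  have hz : gauss (Xq^2) ((b:ℤ)+1-(b:ℤ)-1) 0 = 1 := by
    rw [show ((b:ℤ)+1-(b:ℤ)-1) = ((0:ℕ):ℤ) from by push_cast; ring,
      show (0:ℤ) = ((0:ℕ):ℤ) from rfl]
    exact gauss_zero_right _ qPoch_sq_ne_zero _
  rw [hz]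
  have hterm : ∀ i ∈ Finset.range b,
      qPoch (ε*Xq) Xq i * Xq^(1*(2*1+2*i+1)) * gauss (Xq^2) ((b:ℤ)+1-i-1) 0
      = qPoch (ε*Xq) Xq i * Xq^(1*(2*1+2*i+1)) * gauss (Xq^2) ((b:ℤ)-i-1) 0 := by
    intro i hi
    have hi' : i < b := Finset.mem_range.mp hi
    have g1 : gauss (Xq^2) ((b:ℤ)+1-i-1) 0 = 1 := by
      rw [show ((b:ℤ)+1-i-1) = ((b-i:ℕ):ℤ) from by push_cast [Nat.cast_sub hi'.le]; ring,
        show (0:ℤ) = ((0:ℕ):ℤ) from rfl]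
      exact gauss_zero_right _ qPoch_sq_ne_zero _
    have g2 : gauss (Xq^2) ((b:ℤ)-i-1) 0 = 1 := by
      rw [show ((b:ℤ)-i-1) = ((b-i-1:ℕ):ℤ) from by
          push_cast [Nat.cast_sub (by omega : 1 ≤ b - i), Nat.cast_sub hi'.le]; ring,
        show (0:ℤ) = ((0:ℕ):ℤ) from rfl]
      exact gauss_zero_right _ qPoch_sq_ne_zero _
    rw [g1, g2]
  rw [Finset.sum_congr rfl hterm]
  ring

-- termwise Pascal for stepB
lemma coefB (b m i : ℕ) (hi : i < b) :
    Xq^((m+2)*(2*(m+2)+2*i+1)) * gauss (Xq^2) ((b:ℤ)+1-i-1) ((m:ℤ)+1)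
    = Xq^((m+2)*(2*(m+2)+2*i+1)) * gauss (Xq^2) ((b:ℤ)-i-1) ((m:ℤ)+1)
      + Xq^(2*b+2*(m+2)+1) * Xq^((m+1)*(2*(m+1)+2*i+1)) * gauss (Xq^2) ((b:ℤ)-i-1) (m:ℤ) := by
  obtain ⟨n, hn⟩ : ∃ n : ℕ, b - i - 1 = n := ⟨b-i-1, rfl⟩
  have hc1 : (b:ℤ)+1-i-1 = ((n:ℕ):ℤ)+1 := by omega
  have hc2 : (b:ℤ)-i-1 = ((n:ℕ):ℤ) := by omega
  have hcm : ((m:ℤ)+1) = ((m+1:ℕ):ℤ) := by push_cast; ring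
  rw [hc1, hc2, hcm]
  rcases le_or_gt m n with hmn | hmn
  · have hp := gauss_pascal (Xq^2) qPoch_sq_ne_zero n (m+1) (by omega) (by omega)
    rw [show (((m+1:ℕ)):ℤ) - 1 = ((m:ℕ):ℤ) from by push_cast; ring] at hp
    rw [hp, show n+1-(m+1) = n-m from by omega, mul_add]
    congr 1
    rw [← pow_mul, ← mul_assoc, ← pow_add, ← pow_add]
    congr 2
    have h1 : (m+2)*(2*(m+2)+2*i+1) = 2*(m*m)+2*(m*i)+9*m+4*i+10 := by ring
    have h2 : (m+1)*(2*(m+1)+2*i+1) = 2*(m*m)+2*(m*i)+5*m+2*i+3 := by ring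
    omega
  · rw [gauss_of_gt (Xq^2) (show ((n:ℕ):ℤ)+1 < ((m+1:ℕ):ℤ) from by push_cast; omega),
      gauss_of_gt (Xq^2) (show ((n:ℕ):ℤ) < ((m+1:ℕ):ℤ) from by push_cast; omega),
      gauss_of_gt (Xq^2) (show ((n:ℕ):ℤ) < ((m:ℕ):ℤ) from by push_cast; omega)]
    ring

-- k = m+2 case of the C-step
lemma stepB (ε : RatFunc ℚ) (b m : ℕ) :
    ∑ i ∈ Finset.range (b+1), qPoch (ε*Xq) Xq i * Xq^((m+2)*(2*(m+2)+2*i+1)) * gauss (Xq^2) ((b:ℤ)+1-i-1) ((m:ℤ)+1)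
    = (∑ i ∈ Finset.range b, qPoch (ε*Xq) Xq i * Xq^((m+2)*(2*(m+2)+2*i+1)) * gauss (Xq^2) ((b:ℤ)-i-1) ((m:ℤ)+1))
      + Xq^(2*b+2*(m+2)+1) *
        ∑ i ∈ Finset.range b, qPoch (ε*Xq) Xq i * Xq^((m+1)*(2*(m+1)+2*i+1)) * gauss (Xq^2) ((b:ℤ)-i-1) (m:ℤ) := by
  rw [Finset.sum_range_succ]
  have hz : gauss (Xq^2) ((b:ℤ)+1-(b:ℤ)-1) ((m:ℤ)+1) = 0 :=
    gauss_of_gt _ (by omega)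
  rw [hz, mul_zero, add_zero, Finset.mul_sum]
  rw [← Finset.sum_add_distrib]
  apply Finset.sum_congr rfl
  intro i hi
  have hi' : i < b := Finset.mem_range.mp hi
  have := coefB b m i hi'
  calc qPoch (ε*Xq) Xq i * Xq^((m+2)*(2*(m+2)+2*i+1)) * gauss (Xq^2) ((b:ℤ)+1-i-1) ((m:ℤ)+1)
      = qPoch (ε*Xq) Xq i * (Xq^((m+2)*(2*(m+2)+2*i+1)) * gauss (Xq^2) ((b:ℤ)+1-i-1) ((m:ℤ)+1)) := by ring
    _ = qPoch (ε*Xq) Xq i * (Xq^((m+2)*(2*(m+2)+2*i+1)) * gauss (Xq^2) ((b:ℤ)-i-1) ((m:ℤ)+1)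
          + Xq^(2*b+2*(m+2)+1) * Xq^((m+1)*(2*(m+1)+2*i+1)) * gauss (Xq^2) ((b:ℤ)-i-1) (m:ℤ)) := by rw [this]
    _ = _ := by ring

end STEPS2
lemma main_eq (ε : RatFunc ℚ) (hε : ε = 1 ∨ ε = -1) :
    ∀ b k : ℕ, 1 ≤ k →
    qPoch (ε*Xq) Xq b * T (ε*Xq^b) Xq k =
      (∑ i ∈ Finset.range k, Xq^(i*(2*k+1)) * gauss (Xq^2) (b:ℤ) (i:ℤ) * T ε Xq (k-i))
      + ∑ i ∈ Finset.range b,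
          qPoch (ε*Xq) Xq i * Xq^(k*(2*k+2*i+1)) * gauss (Xq^2) ((b:ℤ)-i-1) ((k:ℤ)-1) := by
  intro b
  induction b with
  | zero =>
    intro k hk
    obtain ⟨m, rfl⟩ : ∃ m, k = m+1 := ⟨k-1, by omega⟩
    rw [qPoch_zero, one_mul, pow_zero, mul_one, Finset.range_zero, Finset.sum_empty, add_zero,
      Finset.sum_range_succ']
    have h0 : Xq^(0*(2*(m+1)+1)) * gauss (Xq^2) ((0:ℕ):ℤ) ((0:ℕ):ℤ) * T ε Xq ((m+1)-0)
        = T ε Xq (m+1) := by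
      have hg := gauss_zero_right (Xq^2) qPoch_sq_ne_zero 0
      simp only [Nat.cast_zero] at hg ⊢
      rw [hg]
      norm_num
    rw [h0, Finset.sum_eq_zero, zero_add]
    intro i _
    rw [gauss_of_gt (Xq^2) (show ((0:ℕ):ℤ) < ((i+1:ℕ):ℤ) from by push_cast; omega)]
    ring
  | succ b IH =>
    intro k hk
    obtain ⟨m, rfl⟩ : ∃ m, k = m+1 := ⟨k-1, by omega⟩
    have e2 : ε*Xq^(b+1) = (ε*Xq^b)*Xq := by rw [pow_succ, mul_assoc]
    have e1 : qPoch (ε*Xq) Xq (b+1) = qPoch (ε*Xq) Xq b * (1 - (ε*Xq^b)*Xq) := by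
      rw [qPoch_succ]; ring
    rw [e2, e1, mul_assoc, T_master (ε*Xq^b) Xq m]
    have hsq : (ε*Xq^b)^2 = Xq^(2*b) := by rcases hε with h|h <;> rw [h] <;> ring
    rw [mul_add, IH (m+1) (by omega), hsq]
    match m with
    | 0 =>
      rw [T_zero, show ((0:ℕ)+1:ℕ) = 1 from rfl,
        show ((b+1:ℕ):ℤ) = (b:ℤ)+1 from by push_cast; ring,
        show (((1:ℕ)):ℤ)-1 = (0:ℤ) from by norm_num]
      have hA := stepA ε b 0
      rw [Finset.range_zero, Finset.sum_empty, mul_zero, add_zero] at hA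
      rw [show (0:ℕ)+1 = 1 from rfl] at hA
      rw [hA, stepB1 ε b]
      ring
    | (m'+1) =>
      have h1 : qPoch (ε*Xq) Xq b * (Xq^(2*b) * Xq^(2*(m'+1)+3) * T (ε*Xq^b) Xq (m'+1))
          = Xq^(2*b+2*(m'+1)+3) * (qPoch (ε*Xq) Xq b * T (ε*Xq^b) Xq (m'+1)) := by
        rw [← pow_add]; ring_nf
      rw [h1, IH (m'+1) (by omega), show ((b+1:ℕ):ℤ) = (b:ℤ)+1 from by push_cast; ring,
        show (((m'+1+1:ℕ)):ℤ)-1 = ((m':ℤ)+1) from by push_cast; ring,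
        show m'+1+1 = m'+2 from rfl]
      rw [show (((m'+1:ℕ)):ℤ)-1 = ((m':ℕ):ℤ) from by push_cast; ring]
      rw [stepA ε b (m'+1), stepB ε b m']
      ring
theorem stmt_3 (ε : RatFunc ℚ) (hε : ε = 1 ∨ ε = -1) (b k : ℕ) (hk : 1 ≤ k) :
    T (ε * Xq^b) Xq k =
      (∑ i ∈ Finset.range k,
        Xq^(i*(2*k+1)) / qPoch (ε * Xq) Xq b * gauss (Xq^2) (b:ℤ) (i:ℤ) * T ε Xq (k-i))
      + ∑ i ∈ Finset.range b,
          qPoch (ε * Xq) Xq i / qPoch (ε * Xq) Xq b * Xq^(k*(2*k+2*i+1)) *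
            gauss (Xq^2) ((b:ℤ) - i - 1) ((k:ℤ) - 1) := by
  have hP := qPoch_eps_ne_zero ε hε b
  have key := main_eq ε hε b k hk
  have expand : (∑ i ∈ Finset.range k,
        Xq^(i*(2*k+1)) / qPoch (ε * Xq) Xq b * gauss (Xq^2) (b:ℤ) (i:ℤ) * T ε Xq (k-i))
      + ∑ i ∈ Finset.range b,
          qPoch (ε * Xq) Xq i / qPoch (ε * Xq) Xq b * Xq^(k*(2*k+2*i+1)) *
            gauss (Xq^2) ((b:ℤ) - i - 1) ((k:ℤ) - 1)
      = ((∑ i ∈ Finset.range k, Xq^(i*(2*k+1)) * gauss (Xq^2) (b:ℤ) (i:ℤ) * T ε Xq (k-i))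
      + ∑ i ∈ Finset.range b,
          qPoch (ε*Xq) Xq i * Xq^(k*(2*k+2*i+1)) * gauss (Xq^2) ((b:ℤ)-i-1) ((k:ℤ)-1))
        / qPoch (ε * Xq) Xq b := by
    rw [add_div, Finset.sum_div, Finset.sum_div]
    congr 1 <;> apply Finset.sum_congr rfl <;> intro i _ <;> field_simp
  rw [expand, ← key, mul_div_cancel_left₀ _ hP]
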